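/- The hierarchy is strict: for every k ≥ 0, T_k is a proper subset of T_{k+1}. -/

import Mathlib

/-- A state `q` of a DFA is *observable* if some word leads from it to an accepting state. -/
def ObsState {α σ : Type} (M : DFA α σ) (q : σ) : Prop :=
  ∃ w : List α, M.evalFrom q w ∈ M.accept

/-- A state is *semi-observable* if it is observable and some single input symbol
leads from it to a non-observable state. -/
def SemiObsState {α σ : Type} (M : DFA α σ) (q : σ) : Prop :=
  ObsState M q ∧ ∃ a : α, ¬ ObsState M (M.step q a)

/-- All states of the DFA are accessible from the start state. -/
def Accessible {α σ : Type} (M : DFA α σ) : Prop :=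
  ∀ q : σ, ∃ w : List α, M.eval w = q

/-- `L` is accepted by some (completely specified, accessible) DFA all of whose
states are observable.  This is membership in the family `O` over the alphabet `α`. -/
def AcceptsObservably (α : Type) (L : Language α) : Prop :=
  ∃ (σ : Type) (_ : Fintype σ) (M : DFA α σ),
    Accessible M ∧ (∀ q : σ, ObsState M q) ∧ M.accepts = L

/-- Membership in the family `T_k`: `L` is accepted by some accessible DFA with at
most `k` semi-observable states. -/
def InT (α : Type) (k : ℕ) (L : Language α) : Prop :=
  ∃ (σ : Type) (_ : Fintype σ) (M : DFA α σ),
    Accessible M ∧ M.accepts = L ∧ {q : σ | SemiObsState M q}.ncard ≤ k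

/-- The alphabet (the whole type `α`) is minimal for `L`: every letter occurs in some word of `L`. -/
def MinimalAlphabet {α : Type} (L : Language α) : Prop :=
  ∀ a : α, ∃ w ∈ L, a ∈ w

/-- The language of constant words. -/
def constLang (α : Type) : Language α := {w | ∃ i : α, ∀ a ∈ w, a = i}

lemma evalFrom_cons' {α σ : Type} (M : DFA α σ) (s : σ) (a : α) (t : List α) :
    M.evalFrom s (a :: t) = M.evalFrom (M.step s a) t := rfl

def upDFA (n : ℕ) : DFA (Fin (n+2)) (Option (Option (Fin (n+2)))) where
  step q a := match q with
    | some none => some (some a)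
    | some (some i) => if a = i then some (some i) else none
    | none => none
  start := some none
  accept := {q | q ≠ none}

lemma fin_one_ne_zero (n : ℕ) : (1 : Fin (n+2)) ≠ 0 := by
  intro h
  have := congrArg Fin.val h
  simp [Fin.val_one] at this

lemma up_evalFrom_none (n : ℕ) (w : List (Fin (n+2))) :
    (upDFA n).evalFrom none w = none := by
  induction w with
  | nil => rfl
  | cons a t ih => rw [evalFrom_cons']; exact ih

lemma up_evalFrom_ss (n : ℕ) (i : Fin (n+2)) (w : List (Fin (n+2))) :
    (upDFA n).evalFrom (some (some i)) w
      = if ∀ a ∈ w, a = i then some (some i) else none := by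
  induction w with
  | nil => simp
  | cons a t ih =>
    rw [evalFrom_cons']
    by_cases h : a = i
    · subst h
      rw [show (upDFA n).step (some (some a)) a = some (some a) from by simp [upDFA]]
      rw [ih]
      simp [List.forall_mem_cons]
    · rw [show (upDFA n).step (some (some i)) a = none from by simp [upDFA, h]]
      rw [up_evalFrom_none]
      simp [h]

lemma up_accepts (n : ℕ) : (upDFA n).accepts = constLang (Fin (n+2)) := by
  ext w
  rw [DFA.mem_accepts]
  cases w with
  | nil => exact iff_of_true (by simp [DFA.eval, upDFA]) ⟨0, by simp⟩
  | cons a t =>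
    have hev : (upDFA n).eval (a :: t) = (upDFA n).evalFrom (some (some a)) t := rfl
    rw [hev, up_evalFrom_ss]
    by_cases ht : ∀ b ∈ t, b = a
    · refine iff_of_true ?_ ⟨a, List.forall_mem_cons.mpr ⟨rfl, ht⟩⟩
      rw [if_pos ht]
      simp [upDFA]
    · refine iff_of_false (by simp [upDFA, ht]) ?_
      rintro ⟨i, hi⟩
      have ha : a = i := hi a (List.mem_cons_self)
      exact ht fun b hb => (hi b (List.mem_cons_of_mem a hb)).trans ha.symm

lemma up_obs_none (n : ℕ) : ¬ ObsState (upDFA n) none := by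
  rintro ⟨w, hw⟩
  rw [up_evalFrom_none] at hw
  simp [upDFA] at hw

lemma up_semiset (n : ℕ) :
    {q | SemiObsState (upDFA n) q}
      = Set.range (fun i : Fin (n+2) => (some (some i) : Option (Option (Fin (n+2))))) := by
  ext q
  simp only [Set.mem_setOf_eq, Set.mem_range]
  constructor
  · rintro ⟨hobs, a, hna⟩
    match q with
    | none => exact absurd hobs (up_obs_none n)
    | some none =>
      exact absurd ⟨[], by simp [upDFA]⟩ hna
    | some (some i) => exact ⟨i, rfl⟩
  · rintro ⟨i, rfl⟩
    refine ⟨⟨[], by simp [upDFA]⟩, if i = 0 then 1 else 0, ?_⟩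
    have hne : (if i = 0 then (1 : Fin (n+2)) else 0) ≠ i := by
      by_cases h : i = 0
      · simpa [h] using fin_one_ne_zero n
      · rw [if_neg h]; exact fun e => h e.symm
    rw [show (upDFA n).step (some (some i)) (if i = 0 then 1 else 0) = none from
      by simp [upDFA, hne]]
    exact up_obs_none n

lemma inT_up (n : ℕ) : InT (Fin (n+2)) (n+2) (constLang (Fin (n+2))) := by
  refine ⟨Option (Option (Fin (n+2))), inferInstance, upDFA n, ?_, up_accepts n, ?_⟩
  · intro q
    match q with
    | some none => exact ⟨[], rfl⟩
    | some (some i) => exact ⟨[i], rfl⟩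
    | none =>
      refine ⟨[0, 1], ?_⟩
      show (upDFA n).step ((upDFA n).step (some none) 0) 1 = none
      simp [upDFA, fin_one_ne_zero n]
  · have hinj : Function.Injective
        (fun i : Fin (n+2) => (some (some i) : Option (Option (Fin (n+2))))) := by
      intro a b h; simpa using h
    rw [up_semiset, ← Set.image_univ, Set.ncard_image_of_injective _ hinj, Set.ncard_univ,
      Nat.card_eq_fintype_card, Fintype.card_fin]

lemma not_inT (n : ℕ) : ¬ InT (Fin (n+2)) (n+1) (constLang (Fin (n+2))) := by
  rintro ⟨σ, fσ, M, -, heq, hcard⟩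
  set p : Fin (n+2) → σ := fun i => M.eval [i] with hp
  have hobs : ∀ i, SemiObsState M (p i) := by
    intro i
    constructor
    · refine ⟨[], ?_⟩
      have h1 : [i] ∈ M.accepts := by rw [heq]; exact ⟨i, by simp⟩
      exact h1
    · set j : Fin (n+2) := if i = 0 then 1 else 0 with hj
      have hji : j ≠ i := by
        rw [hj]
        by_cases h : i = 0
        · simpa [h] using fin_one_ne_zero n
        · rw [if_neg h]; exact fun e => h e.symm
      refine ⟨j, ?_⟩
      rintro ⟨w, hw⟩
      have h2 : ([i, j] ++ w) ∈ M.accepts := by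
        rw [DFA.mem_accepts]
        show M.evalFrom M.start ([i, j] ++ w) ∈ M.accept
        rw [DFA.evalFrom_of_append]
        exact hw
      rw [heq] at h2
      obtain ⟨c, hc⟩ := h2
      have e1 : i = c := hc i (by simp)
      have e2 : j = c := hc j (by simp)
      exact hji (e2.trans e1.symm)
  have hinjp : Function.Injective p := by
    intro i j hij
    by_contra hne
    have h1 : ([i] ++ [i]) ∈ M.accepts := by rw [heq]; exact ⟨i, by simp⟩
    rw [DFA.mem_accepts] at h1
    replace h1 : M.evalFrom (p i) [i] ∈ M.accept := by
      rw [hp]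
      show M.evalFrom (M.evalFrom M.start [i]) [i] ∈ M.accept
      rw [← DFA.evalFrom_of_append]
      exact h1
    rw [hij] at h1
    have h2 : ([j] ++ [i]) ∈ M.accepts := by
      rw [DFA.mem_accepts]
      show M.evalFrom M.start ([j] ++ [i]) ∈ M.accept
      rw [DFA.evalFrom_of_append]
      exact h1
    rw [heq] at h2
    obtain ⟨c, hc⟩ := h2
    exact hne ((hc i (by simp)).trans (hc j (by simp)).symm)
  have hsub : Set.range p ⊆ {q | SemiObsState M q} := by
    rintro q ⟨i, rfl⟩; exact hobs i
  have hle := Set.ncard_le_ncard hsub (Set.toFinite _)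
  rw [← Set.image_univ, Set.ncard_image_of_injective _ hinjp, Set.ncard_univ,
    Nat.card_eq_fintype_card, Fintype.card_fin] at hle
  omega

/-! ### k = 0 witness : L = {[]} over Fin 1 -/

def M0 : DFA (Fin 1) Bool where
  step := fun _ _ => false
  start := true
  accept := {true}

lemma M0_evalFrom_false (w : List (Fin 1)) : M0.evalFrom false w = false := by
  induction w with
  | nil => rfl
  | cons a t ih => simpa [DFA.evalFrom, List.foldl_cons, M0] using ih

lemma M0_accepts : M0.accepts = ({[]} : Language (Fin 1)) := by
  ext w
  rw [DFA.mem_accepts]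
  cases w with
  | nil =>
    simp only [DFA.eval, M0]
    exact iff_of_true rfl rfl
  | cons a t =>
    have : M0.eval (a :: t) = false := by
      show M0.evalFrom M0.start (a :: t) = false
      simp only [DFA.evalFrom, List.foldl_cons]
      exact M0_evalFrom_false t
    rw [this]
    simp only [M0]
    exact iff_of_false (by simp) (List.cons_ne_nil a t)

lemma base_case : InT (Fin 1) 1 {[]} ∧ ¬ InT (Fin 1) 0 {[]} := by
  constructor
  · refine ⟨Bool, inferInstance, M0, ?_, M0_accepts, ?_⟩
    · intro q
      cases q with
      | true => exact ⟨[], rfl⟩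
      | false => exact ⟨[0], rfl⟩
    · have hobs : ¬ ObsState M0 false := by
        rintro ⟨w, hw⟩
        rw [M0_evalFrom_false] at hw
        simp [M0] at hw
      have : {q : Bool | SemiObsState M0 q} = {true} := by
        ext q
        simp only [Set.mem_setOf_eq, Set.mem_singleton_iff]
        constructor
        · rintro ⟨h, -⟩
          cases q with
          | true => rfl
          | false => exact absurd h hobs
        · rintro rfl
          exact ⟨⟨[], rfl⟩, 0, hobs⟩
      rw [this, Set.ncard_singleton]
  · rintro ⟨σ, fσ, M, hacc, heq, hcard⟩
    have hempty : {q : σ | SemiObsState M q} = ∅ :=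
      (Set.ncard_eq_zero (Set.toFinite _)).mp (Nat.le_zero.mp hcard)
    have hstart : ObsState M M.start := by
      refine ⟨[], ?_⟩
      have : ([] : List (Fin 1)) ∈ M.accepts := by rw [heq]; rfl
      exact this
    have hns : ¬ SemiObsState M M.start := by
      intro h
      have hmem : M.start ∈ {q : σ | SemiObsState M q} := h
      rw [hempty] at hmem
      exact hmem
    have hobs0 : ObsState M (M.step M.start 0) := by
      by_contra h
      exact hns ⟨hstart, 0, h⟩
    obtain ⟨w, hw⟩ := hobs0
    have : ((0 : Fin 1) :: w) ∈ M.accepts := by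
      rw [DFA.mem_accepts]
      show M.evalFrom M.start (0 :: w) ∈ M.accept
      simpa [DFA.evalFrom, List.foldl_cons] using hw
    rw [heq] at this
    exact List.cons_ne_nil _ _ this

/-- The hierarchy `T₀ ⊂ T₁ ⊂ T₂ ⊂ …` is strict: `T_k ⊆ T_{k+1}` over every alphabet,
and for each `k` some regular language lies in `T_{k+1}` but not in `T_k`. -/
theorem T_hierarchy_strict (k : ℕ) :
    (∀ (α : Type) (_ : Fintype α) (L : Language α), InT α k L → InT α (k + 1) L) ∧
    (∃ (α : Type) (_ : Fintype α) (L : Language α), InT α (k + 1) L ∧ ¬ InT α k L) := by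
  constructor
  · rintro α _ L ⟨σ, fσ, M, h1, h2, h3⟩
    exact ⟨σ, fσ, M, h1, h2, h3.trans (Nat.le_succ k)⟩
  · cases k with
    | zero => exact ⟨Fin 1, inferInstance, {[]}, base_case⟩
    | succ n => exact ⟨Fin (n+2), inferInstance, constLang (Fin (n+2)), inT_up n, not_inT n⟩
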